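/- Let F : ℝ^n → ℝ^n be a quadratic map (components are quadratic polynomials) and let V ⊆ ℝ^n be a convex set such that the Jacobian of F is invertible at every point of V. Then F is injective on V. -/
import Mathlib


/-- A quadratic map is injective on a convex set on which its Jacobian is
everywhere invertible. -/
theorem quadratic_injOn_convex_nonsingular
    {n : ℕ} (Q : (Fin n → ℝ) →ₗ[ℝ] (Fin n → ℝ) →ₗ[ℝ] (Fin n → ℝ))
    (hQ : ∀ x y, Q x y = Q y x)
    (L : (Fin n → ℝ) →ₗ[ℝ] (Fin n → ℝ)) (c : Fin n → ℝ)
    (F : (Fin n → ℝ) → (Fin n → ℝ))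
    (hF : ∀ x, F x = Q x x + L x + c)
    (V : Set (Fin n → ℝ)) (hV : Convex ℝ V)
    (hJ : ∀ v ∈ V, Function.Bijective (fderiv ℝ F v)) :
    Set.InjOn F V := by
  classical
  let E := (Fin n → ℝ)
  -- package Q as a continuous bilinear map
  let B : E →L[ℝ] E →L[ℝ] E :=
    LinearMap.toContinuousLinearMap
      ((LinearMap.toContinuousLinearMap : (E →ₗ[ℝ] E) ≃ₗ[ℝ] (E →L[ℝ] E)).toLinearMap ∘ₗ Q)
  have hB : ∀ x y : E, B x y = Q x y := by
    intro x y; simp [B]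
  let L' : E →L[ℝ] E := LinearMap.toContinuousLinearMap L
  -- derivative of F at any point v
  have hder : ∀ v : E, HasFDerivAt F
      ((B.precompR E v (ContinuousLinearMap.id ℝ E)
        + B.precompL E (ContinuousLinearMap.id ℝ E) v) + L') v := by
    intro v
    have h1 : HasFDerivAt (fun x : E => B x x)
        (B.precompR E v (ContinuousLinearMap.id ℝ E)
          + B.precompL E (ContinuousLinearMap.id ℝ E) v) v :=
      B.hasFDerivAt_of_bilinear (hasFDerivAt_id v) (hasFDerivAt_id v)
    have h2 : HasFDerivAt (fun x : E => B x x + L' x + c)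
        ((B.precompR E v (ContinuousLinearMap.id ℝ E)
          + B.precompL E (ContinuousLinearMap.id ℝ E) v) + L') v :=
      (h1.add L'.hasFDerivAt).add_const c
    have hFe : F = fun x : E => B x x + L' x + c := by
      funext x; rw [hF x, hB]; rfl
    rw [hFe]; exact h2
  intro x hx y hy hxy
  set m : E := (1/2 : ℝ) • x + (1/2 : ℝ) • y with hm
  have hmV : m ∈ V := hV hx hy one_half_pos.le one_half_pos.le (by norm_num)
  have hfd := (hder m).fderiv
  have hbij := hJ m hmV
  rw [hfd] at hbij
  -- the key identity: F x - F y = DF(m) (x - y)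
  have key : (B.precompR E m (ContinuousLinearMap.id ℝ E)
      + B.precompL E (ContinuousLinearMap.id ℝ E) m + L') (x - y) = F x - F y := by
    have happ : (B.precompR E m (ContinuousLinearMap.id ℝ E)
        + B.precompL E (ContinuousLinearMap.id ℝ E) m + L') (x - y)
        = Q m (x - y) + Q (x - y) m + L (x - y) := by
      simp [ContinuousLinearMap.precompR, ContinuousLinearMap.precompL, hB, L',
        LinearMap.coe_toContinuousLinearMap']
    rw [happ, hF x, hF y]
    have hsym : Q (x - y) m = Q m (x - y) := hQ _ _
    rw [hsym]
    have hQm : Q m (x - y) + Q m (x - y) = Q x x - Q y y := by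
      have : Q m (x - y) = (1/2 : ℝ) • Q x (x - y) + (1/2 : ℝ) • Q y (x - y) := by
        simp [hm, map_add, map_smul]
      rw [this]
      have hx' : Q x (x - y) = Q x x - Q x y := by rw [map_sub]
      have hy' : Q y (x - y) = Q x y - Q y y := by rw [map_sub, hQ y x]
      rw [hx', hy']
      module
    have hL : L (x - y) = L x - L y := map_sub L x y
    rw [hL, hQm]
    abel
  have hz : (B.precompR E m (ContinuousLinearMap.id ℝ E)
      + B.precompL E (ContinuousLinearMap.id ℝ E) m + L') (x - y) = 0 := by
    rw [key, hxy, sub_self]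
  have hx0 : x - y = 0 := hbij.injective (by rw [hz, map_zero])
  exact sub_eq_zero.mp hx0
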